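/- Let A be a real antisymmetric n×n matrix. Then the n-dimensional Mehler kernel converges to the Dirac mass at 0 as t → 0⁺: for every Schwartz function φ on ℝ^n, lim_{t→0⁺} ∫_{ℝ^n} G_A(x,t) φ(x) dx = φ(0). -/

import Mathlib

open Matrix MeasureTheory Topology Filter

open Matrix

/-- The matrix power series `Φ(M) = Σ_{k≥0} M^k/(2k+1)!` (i.e. `sinh(√z)/√z` evaluated on `M`). -/
noncomputable def matPhi {n : ℕ} (M : Matrix (Fin n) (Fin n) ℝ) : Matrix (Fin n) (Fin n) ℝ :=
  ∑' k : ℕ, (((2 * k + 1).factorial : ℝ))⁻¹ • M ^ k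

/-- The matrix power series `C(M) = Σ_{k≥0} M^k/(2k)!` (i.e. `cosh(√z)` evaluated on `M`). -/
noncomputable def matC {n : ℕ} (M : Matrix (Fin n) (Fin n) ℝ) : Matrix (Fin n) (Fin n) ℝ :=
  ∑' k : ℕ, (((2 * k).factorial : ℝ))⁻¹ • M ^ k

/-- `Ψ(M) = C(M) Φ(M)⁻¹`. -/
noncomputable def matPsi {n : ℕ} (M : Matrix (Fin n) (Fin n) ℝ) : Matrix (Fin n) (Fin n) ℝ :=
  matC M * (matPhi M)⁻¹

/-- The `n`-dimensional Mehler kernel attached to a real antisymmetric matrix `A` (with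
`B = −A²`): `G_A(x,t) = (4πt)^{−n/2} det(Φ(t²B))^{−1/2} exp(−(1/(4t)) ⟨Ψ(t²B)x, x⟩)`. -/
noncomputable def mehlerG {n : ℕ} (A : Matrix (Fin n) (Fin n) ℝ) (x : Fin n → ℝ) (t : ℝ) :
    ℝ :=
  (4 * Real.pi * t) ^ (-(n : ℝ) / 2) *
    ((matPhi (t ^ 2 • (-(A * A)))).det) ^ (-(1 : ℝ) / 2) *
    Real.exp (-(1 / (4 * t)) * (((matPsi (t ^ 2 • (-(A * A)))).mulVec x) ⬝ᵥ x))

namespace MehlerProof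


variable {n : ℕ}

noncomputable def nu (M : Matrix (Fin n) (Fin n) ℝ) : ℝ := ∑ i, ∑ j, |M i j|

lemma nu_nonneg (M : Matrix (Fin n) (Fin n) ℝ) : 0 ≤ nu M :=
  Finset.sum_nonneg fun _ _ => Finset.sum_nonneg fun _ _ => abs_nonneg _

lemma row_le_nu (M : Matrix (Fin n) (Fin n) ℝ) (i : Fin n) : ∑ j, |M i j| ≤ nu M :=
  Finset.single_le_sum (f := fun i => ∑ j, |M i j|)
    (fun _ _ => Finset.sum_nonneg fun _ _ => abs_nonneg _) (Finset.mem_univ i)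

lemma abs_le_nu (M : Matrix (Fin n) (Fin n) ℝ) (i j : Fin n) : |M i j| ≤ nu M :=
  le_trans (Finset.single_le_sum (f := fun j => |M i j|)
    (fun _ _ => abs_nonneg _) (Finset.mem_univ j)) (row_le_nu M i)

lemma nu_mul_le (M N : Matrix (Fin n) (Fin n) ℝ) : nu (M * N) ≤ nu M * nu N := by
  have h1 : nu (M * N) ≤ ∑ i, ∑ j, ∑ l, |M i l| * |N l j| := by
    refine Finset.sum_le_sum fun i _ => Finset.sum_le_sum fun j _ => ?_
    rw [Matrix.mul_apply]
    exact (Finset.abs_sum_le_sum_abs _ _).trans (le_of_eq (by simp [abs_mul]))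
  refine h1.trans ?_
  have h2 : ∀ i : Fin n, ∑ j, ∑ l, |M i l| * |N l j| = ∑ l, |M i l| * ∑ j, |N l j| := by
    intro i
    rw [Finset.sum_comm]
    exact Finset.sum_congr rfl fun l _ => by rw [Finset.mul_sum]
  calc ∑ i, ∑ j, ∑ l : Fin n, |M i l| * |N l j|
      = ∑ i, ∑ l, |M i l| * ∑ j, |N l j| := Finset.sum_congr rfl fun i _ => h2 i
    _ ≤ ∑ i, ∑ l, |M i l| * nu N := by
        refine Finset.sum_le_sum fun i _ => Finset.sum_le_sum fun l _ => ?_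
        exact mul_le_mul_of_nonneg_left (row_le_nu N l) (abs_nonneg _)
    _ = nu M * nu N := by
        simp only [nu, Finset.sum_mul]

lemma nu_pow_le (M : Matrix (Fin n) (Fin n) ℝ) (k : ℕ) : nu (M ^ (k + 1)) ≤ nu M ^ (k + 1) := by
  induction k with
  | zero => simp
  | succ k ih =>
    calc nu (M ^ (k + 2)) = nu (M ^ (k+1) * M) := by rw [pow_succ]
      _ ≤ nu (M ^ (k+1)) * nu M := nu_mul_le _ _
      _ ≤ nu M ^ (k+1) * nu M := mul_le_mul_of_nonneg_right ih (nu_nonneg M)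
      _ = nu M ^ (k+2) := (pow_succ _ _).symm


section Series

variable {c : ℕ → ℝ}

lemma term_bound (hcn : ∀ k, 0 ≤ c k) (hc1 : ∀ k, c k ≤ 1)
    (M : Matrix (Fin n) (Fin n) ℝ) (k : ℕ) (i j : Fin n) :
    |c k * (M ^ k) i j| ≤ nu M ^ k := by
  cases k with
  | zero =>
    simp only [pow_zero, Matrix.one_apply, abs_mul]
    refine mul_le_one₀ ?_ (abs_nonneg _) ?_
    · rw [abs_of_nonneg (hcn 0)]; exact hc1 0
    · split <;> simp
  | succ k =>
    rw [abs_mul]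
    calc |c (k+1)| * |(M ^ (k+1)) i j| ≤ 1 * nu M ^ (k+1) := by
          refine mul_le_mul ?_ ((abs_le_nu _ i j).trans (nu_pow_le M k)) (abs_nonneg _) zero_le_one
          rw [abs_of_nonneg (hcn _)]; exact hc1 _
      _ = nu M ^ (k+1) := one_mul _

lemma summable_entry (hcn : ∀ k, 0 ≤ c k) (hc1 : ∀ k, c k ≤ 1)
    (M : Matrix (Fin n) (Fin n) ℝ) (hM : nu M < 1) (i j : Fin n) :
    Summable fun k => c k * (M ^ k) i j :=
  Summable.of_norm_bounded (summable_geometric_of_lt_one (nu_nonneg M) hM)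
    (term_bound hcn hc1 M · i j)

lemma summable_series (hcn : ∀ k, 0 ≤ c k) (hc1 : ∀ k, c k ≤ 1)
    (M : Matrix (Fin n) (Fin n) ℝ) (hM : nu M < 1) :
    Summable fun k => c k • M ^ k := by
  apply Pi.summable.mpr; intro i
  apply Pi.summable.mpr; intro j
  simpa [Matrix.smul_apply, smul_eq_mul] using summable_entry hcn hc1 M hM i j

lemma series_apply (hcn : ∀ k, 0 ≤ c k) (hc1 : ∀ k, c k ≤ 1)
    (M : Matrix (Fin n) (Fin n) ℝ) (hM : nu M < 1) (i j : Fin n) :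
    (∑' k, c k • M ^ k) i j = ∑' k, c k * (M ^ k) i j := by
  have h1 := summable_series hcn hc1 M hM
  rw [show (∑' k, c k • M ^ k) i j = ∑' k, (c k • M ^ k) i j from
    (congrFun (tsum_apply h1) j).trans (tsum_apply (Pi.summable.mp h1 i))]
  simp [Matrix.smul_apply, smul_eq_mul]

lemma series_sub_one (hc0 : c 0 = 1) (hcn : ∀ k, 0 ≤ c k) (hc1 : ∀ k, c k ≤ 1)
    (M : Matrix (Fin n) (Fin n) ℝ) (hM : nu M ≤ 1/2) (i j : Fin n) :
    |(∑' k, c k • M ^ k) i j - (1 : Matrix (Fin n) (Fin n) ℝ) i j| ≤ 2 * nu M := by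
  have hM1 : nu M < 1 := lt_of_le_of_lt hM (by norm_num)
  have hs := summable_entry hcn hc1 M hM1 i j
  rw [series_apply hcn hc1 M hM1 i j, hs.tsum_eq_zero_add]
  have h0 : c 0 * (M ^ 0) i j = (1 : Matrix (Fin n) (Fin n) ℝ) i j := by
    simp [hc0]
  rw [h0, add_sub_cancel_left]
  have hsg : Summable (fun k : ℕ => nu M ^ (k+1)) := by
    have := (summable_geometric_of_lt_one (nu_nonneg M) hM1).mul_left (nu M)
    refine this.congr fun k => ?_
    rw [← pow_succ']
  have h1 : |∑' k, c (k+1) * (M ^ (k+1)) i j| ≤ ∑' k : ℕ, nu M ^ (k+1) := by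
    have hb : ∀ k : ℕ, ‖c (k+1) * (M ^ (k+1)) i j‖ ≤ nu M ^ (k+1) := fun k => by
      rw [Real.norm_eq_abs]; exact term_bound hcn hc1 M (k+1) i j
    have hsn : Summable fun k : ℕ => ‖c (k+1) * (M ^ (k+1)) i j‖ :=
      hsg.of_nonneg_of_le (fun k => norm_nonneg _) hb
    calc |∑' k, c (k+1) * (M ^ (k+1)) i j| ≤ ∑' k, ‖c (k+1) * (M ^ (k+1)) i j‖ :=
          norm_tsum_le_tsum_norm hsn
      _ ≤ ∑' k : ℕ, nu M ^ (k+1) := Summable.tsum_le_tsum hb hsn hsg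
  refine h1.trans ?_
  have h2 : ∑' k : ℕ, nu M ^ (k+1) = nu M * (1 - nu M)⁻¹ := by
    simp_rw [pow_succ']
    rw [tsum_mul_left, tsum_geometric_of_lt_one (nu_nonneg M) hM1]
  rw [h2]
  have h3 : (1 - nu M)⁻¹ ≤ 2 := by
    have := inv_anti₀ (show (0:ℝ) < 1/2 by norm_num) (by linarith : (1:ℝ)/2 ≤ 1 - nu M)
    simpa using this
  calc nu M * (1 - nu M)⁻¹ ≤ nu M * 2 := mul_le_mul_of_nonneg_left h3 (nu_nonneg M)
    _ = 2 * nu M := mul_comm _ _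

lemma nu_smul (a : ℝ) (M : Matrix (Fin n) (Fin n) ℝ) : nu (a • M) = |a| * nu M := by
  simp [nu, abs_mul, Finset.mul_sum]

lemma tendsto_nu (B : Matrix (Fin n) (Fin n) ℝ) :
    Tendsto (fun t : ℝ => nu (t^2 • B)) (𝓝[>] 0) (𝓝 0) := by
  have hcont : Continuous fun t : ℝ => |t^2| * nu B := by continuity
  have h : Tendsto (fun t : ℝ => |t^2| * nu B) (𝓝 0) (𝓝 0) := by
    have := hcont.tendsto 0
    norm_num at this
    simpa using this
  have h' : Tendsto (fun t : ℝ => |t^2| * nu B) (𝓝[>] 0) (𝓝 0) :=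
    h.mono_left nhdsWithin_le_nhds
  refine h'.congr fun t => ?_
  rw [nu_smul]

lemma eventually_nu_le (B : Matrix (Fin n) (Fin n) ℝ) (ε : ℝ) (hε : 0 < ε) :
    ∀ᶠ t in 𝓝[>] (0:ℝ), nu (t^2 • B) ≤ ε := by
  have := (tendsto_nu B).eventually (eventually_le_nhds hε)
  simpa using this

lemma tendsto_series (hc0 : c 0 = 1) (hcn : ∀ k, 0 ≤ c k) (hc1 : ∀ k, c k ≤ 1)
    (B : Matrix (Fin n) (Fin n) ℝ) :
    Tendsto (fun t : ℝ => ∑' k, c k • (t^2 • B) ^ k) (𝓝[>] 0) (𝓝 (1 : Matrix (Fin n) (Fin n) ℝ)) := by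
  refine tendsto_pi_nhds.mpr fun i => ?_
  refine tendsto_pi_nhds.mpr fun j => ?_
  rw [← tendsto_sub_nhds_zero_iff]
  have hev : ∀ᶠ t in 𝓝[>] (0:ℝ),
      ‖(∑' k, c k • (t^2 • B) ^ k) i j - (1 : Matrix (Fin n) (Fin n) ℝ) i j‖ ≤ 2 * nu (t^2 • B) := by
    filter_upwards [eventually_nu_le B (1/2) (by norm_num)] with t ht
    simpa [Real.norm_eq_abs] using series_sub_one hc0 hcn hc1 _ ht i j
  have h2 : Tendsto (fun t : ℝ => 2 * nu (t^2 • B)) (𝓝[>] 0) (𝓝 0) := by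
    have := (tendsto_nu B).const_mul 2
    simpa using this
  exact squeeze_zero_norm' hev h2

end Series

section MatT

variable (A : Matrix (Fin n) (Fin n) ℝ)

lemma fact_inv_nonneg (m : ℕ) : (0:ℝ) ≤ ((m.factorial : ℝ))⁻¹ := by positivity

lemma fact_inv_le_one (m : ℕ) : ((m.factorial : ℝ))⁻¹ ≤ 1 :=
  inv_le_one_of_one_le₀ (by exact_mod_cast Nat.one_le_iff_ne_zero.mpr m.factorial_ne_zero)

lemma tendsto_matPhi :
    Tendsto (fun t : ℝ => matPhi (t^2 • (-(A*A)))) (𝓝[>] 0) (𝓝 1) := by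
  have := tendsto_series (c := fun k => (((2*k+1).factorial : ℝ))⁻¹)
    (by norm_num) (fun k => fact_inv_nonneg _) (fun k => fact_inv_le_one _) (-(A*A))
  exact this

lemma tendsto_matC :
    Tendsto (fun t : ℝ => matC (t^2 • (-(A*A)))) (𝓝[>] 0) (𝓝 1) := by
  have := tendsto_series (c := fun k => (((2*k).factorial : ℝ))⁻¹)
    (by norm_num) (fun k => fact_inv_nonneg _) (fun k => fact_inv_le_one _) (-(A*A))
  exact this

lemma tendsto_det :
    Tendsto (fun t : ℝ => (matPhi (t^2 • (-(A*A)))).det) (𝓝[>] 0) (𝓝 1) := by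
  have hc : Continuous fun M : Matrix (Fin n) (Fin n) ℝ => M.det := continuous_id.matrix_det
  have := (hc.tendsto 1).comp (tendsto_matPhi A)
  simpa [Function.comp_def] using this

lemma tendsto_inv :
    Tendsto (fun t : ℝ => (matPhi (t^2 • (-(A*A))))⁻¹) (𝓝[>] 0) (𝓝 1) := by
  have hadj : Tendsto (fun t : ℝ => (matPhi (t^2 • (-(A*A)))).adjugate) (𝓝[>] 0)
      (𝓝 ((1 : Matrix (Fin n) (Fin n) ℝ).adjugate)) :=
    ((continuous_id.matrix_adjugate).tendsto 1).comp (tendsto_matPhi A)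
  have hdi : Tendsto (fun t : ℝ => ((matPhi (t^2 • (-(A*A)))).det)⁻¹) (𝓝[>] 0) (𝓝 (1 : ℝ)⁻¹) :=
    (tendsto_det A).inv₀ one_ne_zero
  have := hdi.smul hadj
  simp only [inv_one, Matrix.adjugate_one, one_smul] at this
  refine this.congr fun t => ?_
  rw [Matrix.inv_def, Ring.inverse_eq_inv']

lemma tendsto_matPsi :
    Tendsto (fun t : ℝ => matPsi (t^2 • (-(A*A)))) (𝓝[>] 0) (𝓝 1) := by
  have hmul : Continuous fun p : Matrix (Fin n) (Fin n) ℝ × Matrix (Fin n) (Fin n) ℝ =>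
      p.1 * p.2 := continuous_fst.matrix_mul continuous_snd
  have := (hmul.tendsto (1, 1)).comp ((tendsto_matC A).prodMk_nhds (tendsto_inv A))
  simpa [matPsi, Function.comp_def] using this

end MatT

section Quad

lemma quad_continuous (y : Fin n → ℝ) :
    Continuous fun P : Matrix (Fin n) (Fin n) ℝ => P.mulVec y ⬝ᵥ y := by
  simp only [Matrix.mulVec, dotProduct]
  refine continuous_finset_sum _ fun i _ => Continuous.mul ?_ continuous_const
  refine continuous_finset_sum _ fun j _ => Continuous.mul ?_ continuous_const
  exact (continuous_apply j).comp (continuous_apply i)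

lemma tendsto_quad (A : Matrix (Fin n) (Fin n) ℝ) (y : Fin n → ℝ) :
    Tendsto (fun t : ℝ => (matPsi (t^2 • (-(A*A)))).mulVec y ⬝ᵥ y) (𝓝[>] 0) (𝓝 (y ⬝ᵥ y)) := by
  have := ((quad_continuous y).tendsto 1).comp (tendsto_matPsi A)
  simpa [Matrix.one_mulVec, Function.comp_def] using this

lemma quad_lower (P : Matrix (Fin n) (Fin n) ℝ) (δ : ℝ) (hδ0 : 0 ≤ δ)
    (hδ : ∀ i j, |P i j - (1 : Matrix (Fin n) (Fin n) ℝ) i j| ≤ δ) (y : Fin n → ℝ) :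
    y ⬝ᵥ y - δ * n * (y ⬝ᵥ y) ≤ P.mulVec y ⬝ᵥ y := by
  set E : Matrix (Fin n) (Fin n) ℝ := P - 1 with hE
  have hP : P = 1 + E := by rw [hE]; abel
  have hsplit : P.mulVec y ⬝ᵥ y = y ⬝ᵥ y + E.mulVec y ⬝ᵥ y := by
    rw [hP, Matrix.add_mulVec, Matrix.one_mulVec, add_dotProduct]
  have hEij : ∀ i j, |E i j| ≤ δ := fun i j => by
    simpa [hE, Matrix.sub_apply] using hδ i j
  have key : |E.mulVec y ⬝ᵥ y| ≤ δ * n * (y ⬝ᵥ y) := by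
    have h1 : |E.mulVec y ⬝ᵥ y| ≤ ∑ i, ∑ j, |E i j| * (|y j| * |y i|) := by
      simp only [Matrix.mulVec, dotProduct]
      refine (Finset.abs_sum_le_sum_abs _ _).trans (Finset.sum_le_sum fun i _ => ?_)
      rw [abs_mul]
      refine le_trans (mul_le_mul_of_nonneg_right (Finset.abs_sum_le_sum_abs _ _) (abs_nonneg _))
        (le_of_eq ?_)
      rw [Finset.sum_mul]
      exact Finset.sum_congr rfl fun j _ => by rw [abs_mul]; ring
    have h2 : ∑ i, ∑ j, |E i j| * (|y j| * |y i|) ≤ ∑ i, ∑ j, δ * ((y j^2 + y i^2)/2) := by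
      refine Finset.sum_le_sum fun i _ => Finset.sum_le_sum fun j _ => ?_
      have hy : |y j| * |y i| ≤ (y j^2 + y i^2)/2 := by
        nlinarith [sq_nonneg (|y j| - |y i|), sq_abs (y j), sq_abs (y i), abs_nonneg (y j), abs_nonneg (y i)]
      calc |E i j| * (|y j| * |y i|) ≤ δ * (|y j| * |y i|) :=
            mul_le_mul_of_nonneg_right (hEij i j) (by positivity)
        _ ≤ δ * ((y j^2 + y i^2)/2) := mul_le_mul_of_nonneg_left hy hδ0
    have h3 : ∑ i, ∑ j, δ * ((y j^2 + y i^2)/2) = δ * n * (y ⬝ᵥ y) := by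
      have hyy : y ⬝ᵥ y = ∑ i, y i ^ 2 := by
        simp [dotProduct, sq]
      rw [hyy]
      have inner : ∀ i : Fin n, ∑ j, δ * ((y j^2 + y i^2)/2)
          = (δ/2) * (∑ j, y j^2) + (n:ℝ) * (δ/2) * y i^2 := by
        intro i
        calc ∑ j, δ * ((y j^2 + y i^2)/2)
            = ∑ j, ((δ/2) * y j^2 + (δ/2) * y i^2) := Finset.sum_congr rfl fun j _ => by ring
          _ = (∑ j, (δ/2) * y j^2) + ∑ _j : Fin n, (δ/2) * y i^2 := Finset.sum_add_distrib
          _ = (δ/2) * (∑ j, y j^2) + (n:ℝ) * (δ/2) * y i^2 := by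
              rw [← Finset.mul_sum, Finset.sum_const, Finset.card_univ, Fintype.card_fin,
                nsmul_eq_mul]
              ring
      calc ∑ i, ∑ j, δ * ((y j^2 + y i^2)/2)
          = ∑ i : Fin n, ((δ/2) * (∑ j, y j^2) + (n:ℝ) * (δ/2) * y i^2) :=
            Finset.sum_congr rfl fun i _ => inner i
        _ = (∑ _i : Fin n, (δ/2) * (∑ j, y j^2)) + ∑ i, (n:ℝ) * (δ/2) * y i^2 :=
            Finset.sum_add_distrib
        _ = (n:ℝ) * ((δ/2) * ∑ j, y j^2) + ((n:ℝ) * (δ/2)) * ∑ i, y i^2 := by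
            rw [Finset.sum_const, Finset.card_univ, Fintype.card_fin, nsmul_eq_mul,
              ← Finset.mul_sum]
        _ = δ * n * ∑ i, y i^2 := by ring
    exact h1.trans (h2.trans (le_of_eq h3))
  rw [hsplit]
  have := neg_abs_le (E.mulVec y ⬝ᵥ y)
  linarith

lemma quad_continuous_vec (P : Matrix (Fin n) (Fin n) ℝ) :
    Continuous fun y : Fin n → ℝ => P.mulVec y ⬝ᵥ y := by
  simp only [Matrix.mulVec, dotProduct]
  refine continuous_finset_sum _ fun i _ => Continuous.mul ?_ (continuous_apply i)
  exact continuous_finset_sum _ fun j _ => Continuous.mul continuous_const (continuous_apply j)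

lemma dotProduct_self_nonneg (y : Fin n → ℝ) : 0 ≤ y ⬝ᵥ y :=
  Finset.sum_nonneg fun i _ => mul_self_nonneg _

lemma eventually_quad_lower (A : Matrix (Fin n) (Fin n) ℝ) :
    ∀ᶠ t in 𝓝[>] (0:ℝ), ∀ y : Fin n → ℝ,
      (1/2) * (y ⬝ᵥ y) ≤ (matPsi (t^2 • (-(A*A)))).mulVec y ⬝ᵥ y := by
  set δ : ℝ := 1 / (2 * (n + 1)) with hδ
  have hδ0 : 0 < δ := by positivity
  have hev : ∀ᶠ t in 𝓝[>] (0:ℝ), ∀ i j : Fin n,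
      |matPsi (t^2 • (-(A*A))) i j - (1 : Matrix (Fin n) (Fin n) ℝ) i j| ≤ δ := by
    rw [eventually_all]
    intro i
    rw [eventually_all]
    intro j
    have hent : Tendsto (fun t : ℝ => matPsi (t^2 • (-(A*A))) i j) (𝓝[>] 0)
        (𝓝 ((1 : Matrix (Fin n) (Fin n) ℝ) i j)) := by
      have h1 := tendsto_pi_nhds.mp (tendsto_matPsi A) i
      exact tendsto_pi_nhds.mp h1 j
    have := Metric.tendsto_nhds.mp hent δ hδ0
    filter_upwards [this] with t ht
    rw [Real.dist_eq] at ht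
    exact ht.le
  filter_upwards [hev] with t ht y
  have h := quad_lower _ δ hδ0.le ht y
  have hyy := dotProduct_self_nonneg y
  have hδn : δ * n ≤ 1/2 := by
    rw [hδ, div_mul_eq_mul_div, one_mul, div_le_div_iff₀ (by positivity) (by norm_num)]
    push_cast; linarith
  nlinarith [mul_le_mul_of_nonneg_right hδn hyy]

end Quad

end MehlerProof

open MehlerProof

/-- For a real antisymmetric matrix `A`, the `n`-dimensional Mehler kernel
converges to the Dirac mass at `0` as `t → 0⁺`: for every Schwartz function `φ` on `ℝⁿ`,
`∫ G_A(x,t) φ(x) dx → φ(0)`. -/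
theorem stmt_11 (n : ℕ) (A : Matrix (Fin n) (Fin n) ℝ) (hA : Aᵀ = -A)
    (φ : SchwartzMap (Fin n → ℝ) ℝ) :
    Tendsto (fun t : ℝ => ∫ x : Fin n → ℝ, mehlerG A x t * φ x) (𝓝[>] 0) (𝓝 (φ 0)) := by
  set Ψ : ℝ → Matrix (Fin n) (Fin n) ℝ := fun t => matPsi (t ^ 2 • (-(A * A))) with hΨdef
  set D : ℝ → ℝ := fun t => (matPhi (t ^ 2 • (-(A * A)))).det with hDdef
  set Cphi : ℝ := SchwartzMap.seminorm ℝ 0 0 φ with hCdef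
  set I : ℝ → ℝ := fun t => ∫ y : Fin n → ℝ,
      Real.exp (-((Ψ t).mulVec y ⬝ᵥ y)) * φ (Real.sqrt (4 * t) • y) with hIdef
  -- Step 1: eventual equality
  have heq : (fun t : ℝ => ∫ x : Fin n → ℝ, mehlerG A x t * φ x)
      =ᶠ[𝓝[>] (0:ℝ)] (fun t : ℝ => Real.pi ^ (-(n:ℝ)/2) * (D t ^ (-(1:ℝ)/2) * I t)) := by
    filter_upwards [self_mem_nhdsWithin] with t (ht : 0 < t)
    have h4t : (0:ℝ) < 4 * t := by linarith
    set R : ℝ := Real.sqrt (4 * t) with hRdef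
    have hR : 0 < R := Real.sqrt_pos.mpr h4t
    have hRR : R * R = 4 * t := Real.mul_self_sqrt h4t.le
    have e1 : ∫ x : Fin n → ℝ, mehlerG A x t * φ x
        = ((4*Real.pi*t) ^ (-(n:ℝ)/2) * D t ^ (-(1:ℝ)/2)) *
          ∫ x : Fin n → ℝ, Real.exp (-(1/(4*t)) * ((Ψ t).mulVec x ⬝ᵥ x)) * φ x := by
      rw [← integral_const_mul]
      congr 1
      funext x
      simp only [mehlerG, hΨdef, hDdef]
      ring
    have e2 : ∫ x : Fin n → ℝ, Real.exp (-(1/(4*t)) * ((Ψ t).mulVec x ⬝ᵥ x)) * φ x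
        = (R ^ n) * I t := by
      have hcs := MeasureTheory.Measure.integral_comp_smul (μ := volume)
        (f := fun x : Fin n → ℝ => Real.exp (-(1/(4*t)) * ((Ψ t).mulVec x ⬝ᵥ x)) * φ x) R
      have hfin : Module.finrank ℝ (Fin n → ℝ) = n := by
        simp [Module.finrank_pi]
      rw [hfin] at hcs
      have hfR : ∀ y : Fin n → ℝ,
          Real.exp (-(1/(4*t)) * ((Ψ t).mulVec (R • y) ⬝ᵥ (R • y))) * φ (R • y)
          = Real.exp (-((Ψ t).mulVec y ⬝ᵥ y)) * φ (R • y) := by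
        intro y
        congr 2
        rw [Matrix.mulVec_smul, smul_dotProduct, dotProduct_smul]
        simp only [smul_eq_mul]
        rw [← mul_assoc, ← hRR]
        field_simp
      simp only [hfR] at hcs
      rw [abs_of_nonneg (by positivity : (0:ℝ) ≤ ((R ^ n)⁻¹)), smul_eq_mul] at hcs
      have hIt : I t = ∫ x : Fin n → ℝ, Real.exp (-((Ψ t).mulVec x ⬝ᵥ x)) * φ (R • x) := rfl
      rw [hIt, hcs, ← mul_assoc, mul_inv_cancel₀ (by positivity : (R:ℝ) ^ n ≠ 0), one_mul]
    have e3 : (4*Real.pi*t) ^ (-(n:ℝ)/2) * R ^ n = Real.pi ^ (-(n:ℝ)/2) := by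
      have h1 : R ^ n = (4*t) ^ ((n:ℝ)/2) := by
        rw [hRdef, ← Real.rpow_natCast (Real.sqrt (4*t)) n, Real.sqrt_eq_rpow,
          ← Real.rpow_mul h4t.le]
        congr 1
        ring
      have h2 : (4*Real.pi*t : ℝ) = (4*t) * Real.pi := by ring
      rw [h2, Real.mul_rpow h4t.le Real.pi_pos.le, h1]
      calc (4*t) ^ (-(n:ℝ)/2) * Real.pi ^ (-(n:ℝ)/2) * (4*t) ^ ((n:ℝ)/2)
          = ((4*t) ^ (-(n:ℝ)/2) * (4*t) ^ ((n:ℝ)/2)) * Real.pi ^ (-(n:ℝ)/2) := by ring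
        _ = Real.pi ^ (-(n:ℝ)/2) := by
            rw [← Real.rpow_add h4t, neg_div, neg_add_cancel, Real.rpow_zero, one_mul]
    rw [e1, e2, ← e3]
    ring
  -- Step 2: tendsto of determinant part
  have hdet2 : Tendsto (fun t : ℝ => D t ^ (-(1:ℝ)/2)) (𝓝[>] 0) (𝓝 1) := by
    have hc : ContinuousAt (fun x : ℝ => x ^ (-(1:ℝ)/2)) 1 :=
      Real.continuousAt_rpow_const 1 (-(1:ℝ)/2) (Or.inl one_ne_zero)
    have h := hc.tendsto.comp (tendsto_det A)
    rw [Real.one_rpow] at h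
    exact h
  -- Step 3: dominated convergence for I
  have hI : Tendsto I (𝓝[>] 0) (𝓝 (∫ y : Fin n → ℝ, Real.exp (-(y ⬝ᵥ y)) * φ 0)) := by
    rw [hIdef]
    refine tendsto_integral_filter_of_dominated_convergence
      (bound := fun y : Fin n → ℝ => (∏ i, Real.exp (-(1/2) * y i ^ 2)) * Cphi) ?_ ?_ ?_ ?_
    · refine Eventually.of_forall fun t => ?_
      refine Continuous.aestronglyMeasurable ?_
      exact ((quad_continuous_vec (Ψ t)).neg.rexp).mul
        (φ.continuous.comp (continuous_const_smul _))
    · filter_upwards [eventually_quad_lower A] with t ht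
      refine ae_of_all _ fun y => ?_
      have hq := ht y
      have hexp : Real.exp (-((Ψ t).mulVec y ⬝ᵥ y)) ≤ Real.exp (-(1/2 * (y ⬝ᵥ y))) :=
        Real.exp_le_exp.mpr (by linarith)
      have hprod : Real.exp (-(1/2 * (y ⬝ᵥ y))) = ∏ i, Real.exp (-(1/2) * y i ^ 2) := by
        rw [← Real.exp_sum]
        congr 1
        simp only [dotProduct, Finset.mul_sum, ← Finset.sum_neg_distrib]
        exact Finset.sum_congr rfl fun i _ => by ring
      rw [norm_mul, Real.norm_eq_abs, abs_of_nonneg (Real.exp_pos _).le]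
      refine mul_le_mul (hprod ▸ hexp) ?_ (norm_nonneg _) (by positivity)
      exact SchwartzMap.norm_le_seminorm ℝ φ _
    · have hint : Integrable (fun y : Fin n → ℝ => ∏ i, Real.exp (-(1/2) * y i ^ 2)) :=
        Integrable.fintype_prod fun _ : Fin n =>
          integrable_exp_neg_mul_sq (by norm_num : (0:ℝ) < 1/2)
      exact hint.mul_const Cphi
    · refine ae_of_all _ fun y => ?_
      have h1 : Tendsto (fun t : ℝ => Real.exp (-((Ψ t).mulVec y ⬝ᵥ y))) (𝓝[>] 0)
          (𝓝 (Real.exp (-(y ⬝ᵥ y)))) :=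
        (Real.continuous_exp.tendsto _).comp (tendsto_quad A y).neg
      have hRt : Tendsto (fun t : ℝ => Real.sqrt (4 * t)) (𝓝[>] 0) (𝓝 0) := by
        have hc : Continuous fun t : ℝ => Real.sqrt (4 * t) := by continuity
        have := (hc.tendsto 0).mono_left (nhdsWithin_le_nhds (s := Set.Ioi (0:ℝ)))
        simpa using this
      have h2 : Tendsto (fun t : ℝ => φ (Real.sqrt (4 * t) • y)) (𝓝[>] 0) (𝓝 (φ 0)) := by
        have hy : Tendsto (fun t : ℝ => Real.sqrt (4 * t) • y) (𝓝[>] 0) (𝓝 ((0:ℝ) • y)) :=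
          hRt.smul_const y
        rw [zero_smul] at hy
        exact (φ.continuous.tendsto 0).comp hy
      exact h1.mul h2
  -- Step 4: value of the limit integral
  have hval : ∫ y : Fin n → ℝ, Real.exp (-(y ⬝ᵥ y)) * φ 0
      = Real.pi ^ ((n:ℝ)/2) * φ 0 := by
    rw [integral_mul_const]
    congr 1
    have h1 : ∀ y : Fin n → ℝ, Real.exp (-(y ⬝ᵥ y)) = ∏ i, Real.exp (-(1:ℝ) * y i ^ 2) := by
      intro y
      rw [← Real.exp_sum]
      congr 1
      simp only [dotProduct, ← Finset.sum_neg_distrib]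
      exact Finset.sum_congr rfl fun i _ => by ring
    simp only [h1]
    rw [MeasureTheory.integral_fintype_prod_volume_eq_pow (ι := Fin n) (fun x : ℝ => Real.exp (-(1:ℝ) * x ^ 2)),
      integral_gaussian]
    rw [Fintype.card_fin, div_one, ← Real.rpow_natCast (Real.sqrt Real.pi) n,
      Real.sqrt_eq_rpow, ← Real.rpow_mul Real.pi_pos.le]
    congr 1
    ring
  -- Final assembly
  have hmain : Tendsto (fun t : ℝ => Real.pi ^ (-(n:ℝ)/2) * (D t ^ (-(1:ℝ)/2) * I t))
      (𝓝[>] 0) (𝓝 (Real.pi ^ (-(n:ℝ)/2) * (1 * (Real.pi ^ ((n:ℝ)/2) * φ 0)))) := by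
    refine tendsto_const_nhds.mul (hdet2.mul ?_)
    rw [← hval]
    exact hI
  have hfinval : Real.pi ^ (-(n:ℝ)/2) * (1 * (Real.pi ^ ((n:ℝ)/2) * φ 0)) = φ 0 := by
    rw [one_mul, ← mul_assoc, ← Real.rpow_add Real.pi_pos, neg_div, neg_add_cancel,
      Real.rpow_zero, one_mul]
  rw [hfinval] at hmain
  exact Tendsto.congr' heq.symm hmain
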